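/- There exists an absolute constant C_1 > 0 such that for every irrational x ∈ (0,1) and every N ≥ 0, | Σ_{n=0}^{N} log(q_{n+1})/q_n − Σ_{n=0}^{N} log(a_{n+1})/q_n | < C_1. In particular, Σ_{n=0}^∞ log(q_{n+1})/q_n and Σ_{n=0}^∞ log(a_{n+1})/q_n are simultaneously finite or infinite, and when finite their difference is bounded by C_1. -/

import Mathlib

open Set Filter

/-- The Gauss map `G(t) = 1/t − ⌊1/t⌋`. -/
noncomputable def gmap (t : ℝ) : ℝ := 1 / t - ⌊1 / t⌋

/-- `ra y n = a_{n+1}(y) = ⌊1/G^n(y)⌋`, the regular continued fraction partial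
quotients of `y`. -/
noncomputable def ra (y : ℝ) (n : ℕ) : ℤ := ⌊1 / (gmap^[n] y)⌋

/-- `qcf y (n+1) = q_n`, with `q_{-1} = 0`, `q_0 = 1` and
`q_{n+1} = a_{n+1}·q_n + q_{n−1}`: the denominators of the regular convergents. -/
noncomputable def qcf (y : ℝ) : ℕ → ℤ
  | 0 => 0
  | 1 => 1
  | n + 2 => ra y n * qcf y (n + 1) + qcf y n

section Aux

variable {x : ℝ}

lemma gmap_iter_good (hx : Irrational x) (hx01 : x ∈ Set.Ioo (0 : ℝ) 1) (n : ℕ) :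
    Irrational (gmap^[n] x) ∧ gmap^[n] x ∈ Set.Ioo (0 : ℝ) 1 := by
  induction n with
  | zero => exact ⟨hx, hx01⟩
  | succ n ih =>
    have hy := ih.1
    have hy0 := ih.2.1
    have hy1 := ih.2.2
    rw [Function.iterate_succ_apply']
    set y := gmap^[n] x with hydef
    have h1y : Irrational (1 / y) := by simpa [one_div] using hy.inv
    have hg : gmap y = Int.fract (1 / y) := rfl
    have hirr : Irrational (gmap y) := by
      rw [hg, Int.fract]; exact h1y.sub_intCast _
    refine ⟨hirr, ?_, ?_⟩
    · rcases lt_or_eq_of_le (Int.fract_nonneg (1 / y)) with h | h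
      · rwa [hg]
      · exfalso
        rw [hg, ← h] at hirr
        exact not_irrational_zero hirr
    · rw [hg]; exact Int.fract_lt_one _

lemma ra_ge_one (hx : Irrational x) (hx01 : x ∈ Set.Ioo (0 : ℝ) 1) (n : ℕ) :
    1 ≤ ra x n := by
  obtain ⟨-, hy0, hy1⟩ := gmap_iter_good hx hx01 n
  have : (1 : ℝ) < 1 / gmap^[n] x := one_lt_one_div hy0 hy1
  rw [ra, Int.le_floor]
  exact_mod_cast this.le

lemma qcf_pos (hx : Irrational x) (hx01 : x ∈ Set.Ioo (0 : ℝ) 1) (n : ℕ) :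
    0 ≤ qcf x n ∧ 1 ≤ qcf x (n + 1) := by
  induction n with
  | zero => simp [qcf]
  | succ n ih =>
    obtain ⟨h0, h1⟩ := ih
    refine ⟨le_trans zero_le_one h1, ?_⟩
    have ha := ra_ge_one hx hx01 n
    show 1 ≤ ra x n * qcf x (n + 1) + qcf x n
    nlinarith

lemma qcf_mono (hx : Irrational x) (hx01 : x ∈ Set.Ioo (0 : ℝ) 1) (n : ℕ) :
    qcf x n ≤ qcf x (n + 1) := by
  cases n with
  | zero => simp [qcf]
  | succ n =>
    have ha := ra_ge_one hx hx01 n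
    have h0 := (qcf_pos hx hx01 n).1
    have h1 := (qcf_pos hx hx01 n).2
    show qcf x (n + 1) ≤ ra x n * qcf x (n + 1) + qcf x n
    nlinarith

lemma qcf_ge_pow (hx : Irrational x) (hx01 : x ∈ Set.Ioo (0 : ℝ) 1) (n : ℕ) :
    (2 : ℤ) ^ (n / 2) ≤ qcf x (n + 1) ∧ (2 : ℤ) ^ ((n + 1) / 2) ≤ qcf x (n + 2) := by
  induction n with
  | zero =>
    constructor
    · simp [qcf]
    · simpa using (qcf_pos hx hx01 1).2
  | succ n ih =>
    obtain ⟨h0, h1⟩ := ih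
    refine ⟨h1, ?_⟩
    have hdiv : (n + 2) / 2 = n / 2 + 1 := Nat.add_div_right n (by norm_num)
    rw [hdiv, pow_succ]
    have ha := ra_ge_one hx hx01 (n + 1)
    have hm := qcf_mono hx hx01 (n + 1)
    have hp := (qcf_pos hx hx01 (n + 1)).2
    show 2 ^ (n / 2) * 2 ≤ ra x (n + 1) * qcf x (n + 2) + qcf x (n + 1)
    nlinarith

lemma term_bound (hx : Irrational x) (hx01 : x ∈ Set.Ioo (0 : ℝ) 1) (n : ℕ) :
    0 ≤ Real.log (qcf x (n + 2) : ℝ) / (qcf x (n + 1) : ℝ) -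
        Real.log (ra x n : ℝ) / (qcf x (n + 1) : ℝ) ∧
      Real.log (qcf x (n + 2) : ℝ) / (qcf x (n + 1) : ℝ) -
        Real.log (ra x n : ℝ) / (qcf x (n + 1) : ℝ) ≤
        2 * Real.sqrt 2 / (Real.sqrt 2) ^ (n / 2) := by
  have ha : (1 : ℝ) ≤ (ra x n : ℝ) := by exact_mod_cast ra_ge_one hx hx01 n
  have hq : (1 : ℝ) ≤ (qcf x (n + 1) : ℝ) := by exact_mod_cast (qcf_pos hx hx01 n).2
  have hq0 : (0 : ℝ) ≤ (qcf x n : ℝ) := by exact_mod_cast (qcf_pos hx hx01 n).1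
  have hqm : (qcf x n : ℝ) ≤ (qcf x (n + 1) : ℝ) := by
    exact_mod_cast qcf_mono hx hx01 n
  have hQ : (qcf x (n + 2) : ℝ) = (ra x n : ℝ) * (qcf x (n + 1) : ℝ) + (qcf x n : ℝ) := by
    push_cast [qcf]; ring
  set a : ℝ := (ra x n : ℝ)
  set q : ℝ := (qcf x (n + 1) : ℝ)
  have hqpos : (0 : ℝ) < q := lt_of_lt_of_le one_pos hq
  have hapos : (0 : ℝ) < a := lt_of_lt_of_le one_pos ha
  have hlow : a ≤ (qcf x (n + 2) : ℝ) := by rw [hQ]; nlinarith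
  have hhigh : (qcf x (n + 2) : ℝ) ≤ 2 * a * q := by rw [hQ]; nlinarith
  rw [div_sub_div_same]
  constructor
  · apply div_nonneg _ hqpos.le
    have := Real.log_le_log hapos hlow
    linarith
  · have h1 : Real.log (qcf x (n + 2) : ℝ) - Real.log a ≤ Real.log (2 * q) := by
      have h2 : Real.log (qcf x (n + 2) : ℝ) ≤ Real.log (2 * a * q) :=
        Real.log_le_log (lt_of_lt_of_le hapos hlow) hhigh
      have h3 : Real.log (2 * a * q) = Real.log a + Real.log (2 * q) := by
        rw [show 2 * a * q = a * (2 * q) by ring,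
          Real.log_mul (ne_of_gt hapos) (by positivity)]
      linarith
    have h2q : (0 : ℝ) < 2 * q := by linarith
    have hlog2q : Real.log (2 * q) ≤ 2 * Real.sqrt (2 * q) := by
      have := Real.log_le_sub_one_of_pos (Real.sqrt_pos.mpr h2q)
      have hls := Real.log_sqrt h2q.le
      nlinarith [Real.sqrt_nonneg (2 * q)]
    have hsplit : Real.sqrt (2 * q) = Real.sqrt 2 * Real.sqrt q :=
      Real.sqrt_mul (by norm_num) q
    -- sqrt q ≥ (sqrt 2)^(n/2)
    have hq2 : (2 : ℝ) ^ (n / 2) ≤ q := by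
      have h : ((2 ^ (n / 2) : ℤ) : ℝ) ≤ ((qcf x (n + 1) : ℤ) : ℝ) :=
        Int.cast_le.mpr (qcf_ge_pow hx hx01 n).1
      push_cast at h
      exact h
    have hsqrtpow : Real.sqrt ((2 : ℝ) ^ (n / 2)) = (Real.sqrt 2) ^ (n / 2) := by
      induction (n / 2) with
      | zero => simp
      | succ k ih => rw [pow_succ, pow_succ, Real.sqrt_mul (by positivity), ih]
    have hsq : (Real.sqrt 2) ^ (n / 2) ≤ Real.sqrt q := by
      rw [← hsqrtpow]
      exact Real.sqrt_le_sqrt hq2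
    have hsqpos : (0 : ℝ) < (Real.sqrt 2) ^ (n / 2) := by positivity
    have hsqq : Real.sqrt q * Real.sqrt q = q := Real.mul_self_sqrt hqpos.le
    -- combine
    have hterm : (Real.log (qcf x (n + 2) : ℝ) - Real.log a) / q ≤ 2 * Real.sqrt 2 / Real.sqrt q := by
      rw [div_le_div_iff₀ hqpos (Real.sqrt_pos.mpr hqpos)]
      calc (Real.log (qcf x (n + 2) : ℝ) - Real.log a) * Real.sqrt q
          ≤ (2 * Real.sqrt (2 * q)) * Real.sqrt q := by
            apply mul_le_mul_of_nonneg_right (le_trans h1 hlog2q) (Real.sqrt_nonneg q)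
        _ = 2 * Real.sqrt 2 * (Real.sqrt q * Real.sqrt q) := by rw [hsplit]; ring
        _ = 2 * Real.sqrt 2 * q := by rw [hsqq]
    refine le_trans hterm ?_
    apply div_le_div_of_nonneg_left (by positivity) hsqpos hsq

end Aux

/-- Lemma 2.15: there is an absolute constant `C_1 > 0` such that for every
irrational `x ∈ (0,1)` and every `N ≥ 0`,
`|∑_{n=0}^{N} log(q_{n+1})/q_n − ∑_{n=0}^{N} log(a_{n+1})/q_n| < C_1`. -/
theorem log_q_series_close_to_log_a_series :
    ∃ C : ℝ, 0 < C ∧ ∀ x : ℝ, Irrational x → x ∈ Set.Ioo (0 : ℝ) 1 → ∀ N : ℕ,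
      |∑ n ∈ Finset.range (N + 1), Real.log (qcf x (n + 2) : ℝ) / (qcf x (n + 1) : ℝ) -
        ∑ n ∈ Finset.range (N + 1), Real.log (ra x n : ℝ) / (qcf x (n + 1) : ℝ)| < C := by
  set u : ℝ := Real.sqrt (Real.sqrt 2)⁻¹ with hu
  have hs2 : (1 : ℝ) < Real.sqrt 2 := by
    rw [show (1 : ℝ) = Real.sqrt 1 by simp]
    exact Real.sqrt_lt_sqrt (by norm_num) (by norm_num)
  have hupos : 0 < u := Real.sqrt_pos.mpr (by positivity)
  have hult : u < 1 := by
    rw [hu, show (1 : ℝ) = Real.sqrt 1 by simp]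
    exact Real.sqrt_lt_sqrt (by positivity) (by rw [inv_lt_one_iff₀]; right; exact hs2)
  -- key: (sqrt 2)⁻¹ ^ (n/2) ≤ u ^ n / u
  have hkey : ∀ n : ℕ, ((Real.sqrt 2)⁻¹) ^ (n / 2) ≤ u ^ n / u := by
    intro n
    have hu2 : u ^ 2 = (Real.sqrt 2)⁻¹ := Real.sq_sqrt (by positivity)
    have h1 : ((Real.sqrt 2)⁻¹) ^ (n / 2) = u ^ (2 * (n / 2)) := by
      rw [pow_mul, hu2]
    rw [h1]
    have h2 : n - 1 ≤ 2 * (n / 2) := by omega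
    have h3 : u ^ (2 * (n / 2)) ≤ u ^ (n - 1) :=
      pow_le_pow_of_le_one hupos.le hult.le h2
    refine h3.trans ?_
    cases n with
    | zero =>
      simp only [Nat.zero_sub, pow_zero]
      rw [le_div_iff₀ hupos]
      simpa using hult.le
    | succ m =>
      simp only [Nat.add_sub_cancel]
      rw [le_div_iff₀ hupos, pow_succ]
  set K : ℝ := 2 * Real.sqrt 2 / u
  have hKpos : 0 < K := by positivity
  have h1u : (0 : ℝ) < (1 - u)⁻¹ := inv_pos.mpr (by linarith)
  refine ⟨K * (1 - u)⁻¹ + 1, by nlinarith, ?_⟩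
  intro x hx hx01 N
  have hterm := fun n => term_bound hx hx01 n
  rw [← Finset.sum_sub_distrib]
  have hnonneg : 0 ≤ ∑ n ∈ Finset.range (N + 1),
      (Real.log (qcf x (n + 2) : ℝ) / (qcf x (n + 1) : ℝ) -
        Real.log (ra x n : ℝ) / (qcf x (n + 1) : ℝ)) :=
    Finset.sum_nonneg fun n _ => (hterm n).1
  rw [abs_of_nonneg hnonneg]
  have hsum : ∑ n ∈ Finset.range (N + 1),
      (Real.log (qcf x (n + 2) : ℝ) / (qcf x (n + 1) : ℝ) -
        Real.log (ra x n : ℝ) / (qcf x (n + 1) : ℝ)) ≤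
      ∑ n ∈ Finset.range (N + 1), K * u ^ n := by
    apply Finset.sum_le_sum
    intro n _
    refine (hterm n).2.trans ?_
    have h1 : 2 * Real.sqrt 2 / (Real.sqrt 2) ^ (n / 2)
        = 2 * Real.sqrt 2 * ((Real.sqrt 2)⁻¹) ^ (n / 2) := by
      rw [inv_pow, div_eq_mul_inv]
    rw [h1]
    calc 2 * Real.sqrt 2 * ((Real.sqrt 2)⁻¹) ^ (n / 2)
        ≤ 2 * Real.sqrt 2 * (u ^ n / u) := by
          apply mul_le_mul_of_nonneg_left (hkey n) (by positivity)
      _ = K * u ^ n := by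
          simp only [K]
          ring
  have hgeom : ∑ n ∈ Finset.range (N + 1), K * u ^ n ≤ K * (1 - u)⁻¹ := by
    rw [← Finset.mul_sum]
    apply mul_le_mul_of_nonneg_left _ hKpos.le
    have := Summable.sum_le_tsum (Finset.range (N + 1))
      (fun n _ => by positivity : ∀ n ∉ Finset.range (N + 1), (0:ℝ) ≤ u ^ n)
      (summable_geometric_of_lt_one hupos.le hult)
    rwa [tsum_geometric_of_lt_one hupos.le hult] at this
  linarith
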